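/- Let λ, μ, α > 0 and let φ satisfy φ(T)/T → ∞ as T → ∞. Then the family of random variables ξ_T(1) satisfies the large deviation principle with normalizing function ψ(T) = φ(T)·ln(φ(T)/T) and rate function I_2, where I_2(x) = ∞ for x < 0 and I_2(x) = x for x ≥ 0 (superlarge deviation principle). -/

import Mathlib

open MeasureTheory ProbabilityTheory Filter Set
open scoped ENNReal Topology

noncomputable section

/-- Transition probabilities of the embedded Markov chain of the Poisson process with
uniform catastrophes: from `i ≥ 1`, go to `i+1` with probability `λ/(λ+μ)` and to each
`j < i` with probability `μ/(i(λ+μ))`; from `0`, go to `1` with probability `1`. -/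
def transP (lam mu : ℝ) (i j : ℕ) : ℝ :=
  if i = 0 then (if j = 1 then 1 else 0)
  else if j = i + 1 then lam / (lam + mu)
  else if j < i then mu / (i * (lam + mu))
  else 0

/-- `η` is (distributed as) the discrete-time Markov chain on `ℕ` started at `x` with
transition probabilities `transP lam mu`, under the probability measure `P`:
the finite-dimensional distributions are products of transition probabilities. -/
def IsMarkovChainFrom {Ω : Type*} [MeasurableSpace Ω] (P : Measure Ω)
    (lam mu : ℝ) (x : ℕ) (η : ℕ → Ω → ℕ) : Prop :=
  (∀ k, Measurable (η k)) ∧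
  ∀ (n : ℕ) (path : ℕ → ℕ),
    P {ω | ∀ l ≤ n, η l ω = path l} =
      (if path 0 = x then 1 else 0) *
        ∏ l ∈ Finset.range n, ENNReal.ofReal (transP lam mu (path l) (path (l + 1)))

/-- `ν` is a Poisson process of rate `α` under `P`: it starts at `0`, has monotone paths
on `[0,∞)`, independent increments, and each increment over `[s,t]` is Poisson
distributed with mean `α(t-s)`. -/
def IsPoissonProcess {Ω : Type*} [MeasurableSpace Ω] (P : Measure Ω)
    (α : ℝ) (ν : ℝ → Ω → ℕ) : Prop :=
  (∀ t, Measurable (ν t)) ∧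
  (∀ ω, ν 0 ω = 0) ∧
  (∀ ω, MonotoneOn (fun t => ν t ω) (Set.Ici (0 : ℝ))) ∧
  (∀ (n : ℕ) (t : ℕ → ℝ), 0 ≤ t 0 → Monotone t →
    iIndepFun
      (fun i : Fin n => fun ω => ν (t (i + 1)) ω - ν (t i) ω) P) ∧
  (∀ s t : ℝ, 0 ≤ s → s ≤ t → ∀ k : ℕ,
    P {ω | ν t ω - ν s ω = k} =
      ENNReal.ofReal (Real.exp (-(α * (t - s))) * (α * (t - s)) ^ k / (Nat.factorial k)))

/-- The processes `η` and `ν` are independent (as processes). -/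
def IndepProc {Ω : Type*} [MeasurableSpace Ω] (P : Measure Ω)
    (η : ℕ → Ω → ℕ) (ν : ℝ → Ω → ℕ) : Prop :=
  IndepFun (fun ω => fun k => η k ω) (fun ω => fun t => ν t ω) P

lemma transP_eq_zero (lam mu : ℝ) {i j : ℕ} (h : i + 1 < j) : transP lam mu i j = 0 := by
  unfold transP
  rcases Nat.eq_zero_or_pos i with hi | hi
  · subst hi
    rw [if_pos rfl, if_neg (by omega : ¬ j = 1)]
  · rw [if_neg (by omega), if_neg (by omega), if_neg (by omega)]

lemma path_bound {p : ℕ → ℕ} (h0 : p 0 = 0) {k : ℕ} (h : ∀ l < k, p (l+1) ≤ p l + 1) :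
    p k ≤ k := by
  induction k with
  | zero => omega
  | succ n ih =>
    have := h n (by omega)
    have := ih (fun l hl => h l (by omega))
    omega

lemma markov_null {Ω : Type*} [MeasurableSpace Ω] (P : Measure Ω) (lam mu : ℝ)
    (η : ℕ → Ω → ℕ) (hη : IsMarkovChainFrom P lam mu 0 η) (k : ℕ) :
    P {ω | k < η k ω} = 0 := by
  obtain ⟨hm, hd⟩ := hη
  have hsub : {ω | k < η k ω} ⊆
      ⋃ (v : {v : Fin (k+1) → ℕ // k < v (Fin.last k)}),
        {ω | ∀ l ≤ k, η l ω = (fun l => if h : l < k+1 then v.1 ⟨l, h⟩ else 0) l} := by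
    intro ω hω
    refine mem_iUnion.2 ⟨⟨fun i => η i.1 ω, ?_⟩, fun l hl => ?_⟩
    · simpa using hω
    · simp only [dif_pos (Nat.lt_succ_of_le hl)]
  refine measure_mono_null hsub (measure_iUnion_null fun v => ?_)
  set p : ℕ → ℕ := fun l => if h : l < k+1 then v.1 ⟨l, h⟩ else 0 with hp
  rw [hd k p]
  by_cases h0 : p 0 = 0
  · -- find a bad step
    have hpk : k < p k := by
      have : p k = v.1 (Fin.last k) := by simp [hp, Fin.last]
      rw [this]; exact v.2
    have : ¬ ∀ l < k, p (l+1) ≤ p l + 1 := fun h => absurd (path_bound h0 h) (by omega)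
    push_neg at this
    obtain ⟨l, hlk, hl⟩ := this
    have : ENNReal.ofReal (transP lam mu (p l) (p (l+1))) = 0 := by
      rw [transP_eq_zero lam mu (by omega)]; simp
    rw [Finset.prod_eq_zero (Finset.mem_range.2 hlk) this, mul_zero]
  · rw [if_neg h0, zero_mul]

lemma markov_straight {Ω : Type*} [MeasurableSpace Ω] (P : Measure Ω) {lam mu : ℝ}
    (hlam : 0 < lam) (hmu : 0 < mu)
    (η : ℕ → Ω → ℕ) (hη : IsMarkovChainFrom P lam mu 0 η) (m : ℕ) :
    ENNReal.ofReal ((lam / (lam + mu)) ^ m) ≤ P {ω | ∀ l ≤ m, η l ω = l} := by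
  obtain ⟨hm, hd⟩ := hη
  have := hd m id
  simp only [id] at this
  rw [this, if_pos trivial, one_mul]
  set c := lam / (lam + mu) with hc
  have hc0 : 0 ≤ c := by positivity
  have hc1 : c ≤ 1 := by
    rw [hc, div_le_one (by linarith)]; linarith
  calc ENNReal.ofReal (c ^ m) = ∏ l ∈ Finset.range m, ENNReal.ofReal c := by
        rw [Finset.prod_const, Finset.card_range, ← ENNReal.ofReal_pow hc0]
    _ ≤ ∏ l ∈ Finset.range m, ENNReal.ofReal (transP lam mu l (l+1)) := by
        refine Finset.prod_le_prod' fun l _ => ENNReal.ofReal_le_ofReal ?_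
        unfold transP
        rcases Nat.eq_zero_or_pos l with h | h
        · subst h; simpa using hc1
        · rw [if_neg (by omega), if_pos rfl]

lemma poisson_pt {Ω : Type*} [MeasurableSpace Ω] (P : Measure Ω) {α : ℝ}
    (ν : ℝ → Ω → ℕ) (hν : IsPoissonProcess P α ν) {T : ℝ} (hT : 0 ≤ T) (m : ℕ) :
    P {ω | ν T ω = m} =
      ENNReal.ofReal (Real.exp (-(α * T)) * (α * T) ^ m / (Nat.factorial m)) := by
  have h := hν.2.2.2.2 0 T le_rfl hT m
  have hset : {ω | ν T ω - ν 0 ω = m} = {ω | ν T ω = m} := by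
    ext ω; simp [hν.2.1 ω]
  rw [hset, sub_zero] at h
  exact h

lemma poisson_tail {Ω : Type*} [MeasurableSpace Ω] (P : Measure Ω) {α : ℝ}
    (ν : ℝ → Ω → ℕ) (hν : IsPoissonProcess P α ν) {T : ℝ} (hT : 0 ≤ T) (hα : 0 ≤ α) (m : ℕ) :
    P {ω | m ≤ ν T ω} ≤ ENNReal.ofReal ((α * T) ^ m / (Nat.factorial m)) := by
  set x := α * T with hx
  have hx0 : 0 ≤ x := by positivity
  have hsub : {ω | m ≤ ν T ω} ⊆ ⋃ k : ℕ, {ω | ν T ω = m + k} := fun ω hω =>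
    mem_iUnion.2 ⟨ν T ω - m, by simp only [mem_setOf_eq] at hω ⊢; omega⟩
  calc P {ω | m ≤ ν T ω} ≤ ∑' k : ℕ, P {ω | ν T ω = m + k} :=
        (measure_mono hsub).trans (measure_iUnion_le _)
    _ ≤ ∑' k : ℕ, ENNReal.ofReal (x ^ m / (Nat.factorial m)) *
          ENNReal.ofReal (Real.exp (-x) * x ^ k / (Nat.factorial k)) := by
        refine ENNReal.tsum_le_tsum fun k => ?_
        rw [poisson_pt P ν hν hT (m+k), ← ENNReal.ofReal_mul (by positivity)]
        refine ENNReal.ofReal_le_ofReal ?_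
        rw [pow_add]
        have hfac : (Nat.factorial m : ℝ) * (Nat.factorial k) ≤ (Nat.factorial (m+k)) := by
          exact_mod_cast Nat.le_of_dvd (Nat.factorial_pos _) (Nat.factorial_mul_factorial_dvd_factorial_add m k)
        have h1 : (0:ℝ) < Nat.factorial (m+k) := by positivity
        have h2 : (0:ℝ) < (Nat.factorial m : ℝ) * (Nat.factorial k) := by positivity
        calc Real.exp (-x) * (x ^ m * x ^ k) / (Nat.factorial (m+k))
            ≤ Real.exp (-x) * (x ^ m * x ^ k) / ((Nat.factorial m : ℝ) * (Nat.factorial k)) := by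
              apply div_le_div_of_nonneg_left (by positivity) h2 hfac
          _ = x ^ m / (Nat.factorial m) * (Real.exp (-x) * x ^ k / (Nat.factorial k)) := by
              ring
    _ = ENNReal.ofReal (x ^ m / (Nat.factorial m)) *
          ∑' k : ℕ, ENNReal.ofReal (Real.exp (-x) * x ^ k / (Nat.factorial k)) :=
        ENNReal.tsum_mul_left
    _ ≤ ENNReal.ofReal (x ^ m / (Nat.factorial m)) * 1 := by
        gcongr
        have : ∀ k : ℕ, ENNReal.ofReal (Real.exp (-x) * x ^ k / (Nat.factorial k)) =
            poissonPMF x.toNNReal k := by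
          intro k
          show _ = ENNReal.ofReal (poissonPMFReal x.toNNReal k)
          unfold poissonPMFReal
          rw [Real.coe_toNNReal x hx0]
        rw [tsum_congr this]
        exact le_of_eq ((poissonPMF x.toNNReal).tsum_coe)
    _ = ENNReal.ofReal (x ^ m / (Nat.factorial m)) := mul_one _

lemma indep_event {Ω : Type*} [MeasurableSpace Ω] (P : Measure Ω)
    (η : ℕ → Ω → ℕ) (ν : ℝ → Ω → ℕ) (hind : IndepProc P η ν) (m : ℕ) (T : ℝ) :
    P ({ω | ∀ l ≤ m, η l ω = l} ∩ {ω | ν T ω = m}) =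
      P {ω | ∀ l ≤ m, η l ω = l} * P {ω | ν T ω = m} := by
  have hs : MeasurableSet {f : ℕ → ℕ | ∀ l ≤ m, f l = l} := by
    have : {f : ℕ → ℕ | ∀ l ≤ m, f l = l} = ⋂ l, ⋂ (_ : l ≤ m), (fun f : ℕ → ℕ => f l) ⁻¹' {l} := by
      ext f; simp
    rw [this]
    exact MeasurableSet.iInter fun l => MeasurableSet.iInter fun _ =>
      (measurable_pi_apply l) (measurableSet_singleton l)
  have ht : MeasurableSet {g : ℝ → ℕ | g T = m} := by
    have : {g : ℝ → ℕ | g T = m} = (fun g : ℝ → ℕ => g T) ⁻¹' {m} := rfl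
    rw [this]
    exact (measurable_pi_apply T) (measurableSet_singleton m)
  have := (indepFun_iff_measure_inter_preimage_eq_mul.mp hind) _ _ hs ht
  exact this

section Limits

variable {φ : ℝ → ℝ}

lemma phi_top (hφ : Filter.Tendsto (fun T => φ T / T) Filter.atTop Filter.atTop) : Filter.Tendsto φ Filter.atTop Filter.atTop := by
  apply tendsto_atTop_mono' Filter.atTop (f₁ := fun T => T)
  · filter_upwards [hφ.eventually_ge_atTop 1, eventually_gt_atTop (0:ℝ)] with T h1 h2
    nlinarith [(le_div_iff₀ h2).mp h1]
  · exact tendsto_id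

lemma logratio_top (hφ : Filter.Tendsto (fun T => φ T / T) Filter.atTop Filter.atTop) :
    Filter.Tendsto (fun T => Real.log (φ T / T)) Filter.atTop Filter.atTop :=
  Real.tendsto_log_atTop.comp hφ

lemma psi_top (hφ : Filter.Tendsto (fun T => φ T / T) Filter.atTop Filter.atTop) :
    Filter.Tendsto (fun T => φ T * Real.log (φ T / T)) Filter.atTop Filter.atTop :=
  Filter.Tendsto.atTop_mul_atTop₀ (phi_top hφ) (logratio_top hφ)

lemma core_lim (hφpos : ∀ T > (0:ℝ), 0 < φ T)
    (hφ : Filter.Tendsto (fun T => φ T / T) Filter.atTop Filter.atTop) {x : ℝ} (hx : 0 < x) (A B α : ℝ) (hα : 0 < α) :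
    Filter.Tendsto (fun T => (φ T * Real.log (φ T / T))⁻¹ *
      ((⌈x * φ T⌉₊ : ℝ) * (Real.log (α * T) - Real.log (⌈x * φ T⌉₊ : ℝ) + A) - B * T))
      Filter.atTop (𝓝 (-x)) := by
  set m : ℝ → ℝ := fun T => (⌈x * φ T⌉₊ : ℝ) with hm
  set L : ℝ → ℝ := fun T => Real.log (φ T / T) with hL
  have hφtop := phi_top hφ
  have hLtop := logratio_top hφ
  -- eventual positivity facts
  have hev : ∀ᶠ T in Filter.atTop, 0 < T ∧ 0 < φ T ∧ 0 < L T ∧ 1 ≤ x * φ T := by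
    filter_upwards [eventually_gt_atTop (0:ℝ), hLtop.eventually_gt_atTop 0,
      hφtop.eventually_ge_atTop (1/x)] with T h1 h2 h3
    exact ⟨h1, hφpos T h1, h2, by rw [div_le_iff₀ hx] at h3; linarith⟩
  have hmlb : ∀ᶠ T in Filter.atTop, x * φ T ≤ m T ∧ m T ≤ x * φ T + 1 ∧ 1 ≤ m T := by
    filter_upwards [hev] with T hT
    refine ⟨Nat.le_ceil _, ?_, ?_⟩
    · exact le_of_lt (Nat.ceil_lt_add_one (by nlinarith [hT.2.2.2]))
    · calc (1:ℝ) ≤ x * φ T := hT.2.2.2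
        _ ≤ m T := Nat.le_ceil _
  -- m/φ → x
  have hmφ : Filter.Tendsto (fun T => m T / φ T) Filter.atTop (𝓝 x) := by
    have hup : Filter.Tendsto (fun T => x + (φ T)⁻¹) Filter.atTop (𝓝 (x + 0)) :=
      tendsto_const_nhds.add hφtop.inv_tendsto_atTop
    rw [add_zero] at hup
    apply tendsto_of_tendsto_of_tendsto_of_le_of_le' tendsto_const_nhds hup
    · filter_upwards [hev, hmlb] with T h h2
      rw [le_div_iff₀ h.2.1]; nlinarith [h2.1]
    · filter_upwards [hev, hmlb] with T h h2
      rw [div_le_iff₀ h.2.1]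
      have : (φ T)⁻¹ * φ T = 1 := inv_mul_cancel₀ (ne_of_gt h.2.1)
      nlinarith [h2.2.1]
  have hlogmφ : Filter.Tendsto (fun T => Real.log (m T / φ T)) Filter.atTop (𝓝 (Real.log x)) :=
    (Real.continuousAt_log (ne_of_gt hx)).tendsto.comp hmφ
  -- the target decomposition
  have hTφ : Filter.Tendsto (fun T => T / φ T) Filter.atTop (𝓝 0) := by
    have := hφ.inv_tendsto_atTop
    apply this.congr'
    filter_upwards [eventually_gt_atTop (0:ℝ)] with T h1
    simp only [Pi.inv_apply]
    rw [inv_div]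
  have hLinv : Filter.Tendsto (fun T => (L T)⁻¹) Filter.atTop (𝓝 0) := hLtop.inv_tendsto_atTop
  have hratio : Filter.Tendsto
      (fun T => -1 + (Real.log α + A - Real.log (m T / φ T)) / L T) Filter.atTop (𝓝 (-1)) := by
    have h2 : Filter.Tendsto (fun T => (Real.log α + A - Real.log (m T / φ T)) / L T)
        Filter.atTop (𝓝 0) :=
      Filter.Tendsto.div_atTop ((tendsto_const_nhds.sub hlogmφ)) hLtop
    simpa using tendsto_const_nhds.add h2
  have hmain : Filter.Tendsto
      (fun T => m T / φ T * (-1 + (Real.log α + A - Real.log (m T / φ T)) / L T)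
        - B * (T / φ T) * (L T)⁻¹) Filter.atTop (𝓝 (-x)) := by
    have hB : Filter.Tendsto (fun _ : ℝ => B) Filter.atTop (𝓝 B) := tendsto_const_nhds
    have := (hmφ.mul hratio).sub ((hB.mul hTφ).mul hLinv)
    simpa using this
  apply hmain.congr'
  filter_upwards [hev, hmlb] with T h h2
  obtain ⟨hT0, hφ0, hL0, _⟩ := h
  have hm0 : 0 < m T := by linarith [h2.2.2]
  have e1 : Real.log (α * T) = Real.log α + Real.log T :=
    Real.log_mul (ne_of_gt hα) (ne_of_gt hT0)
  have e2 : Real.log (m T / φ T) = Real.log (m T) - Real.log (φ T) :=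
    Real.log_div (ne_of_gt hm0) (ne_of_gt hφ0)
  have e3 : L T = Real.log (φ T) - Real.log T :=
    Real.log_div (ne_of_gt hφ0) (ne_of_gt hT0)
  have hLne : Real.log (φ T) - Real.log T ≠ 0 := by rw [← e3]; exact ne_of_gt hL0
  have hφne : φ T ≠ 0 := ne_of_gt hφ0
  show m T / φ T * (-1 + (Real.log α + A - Real.log (m T / φ T)) / L T)
        - B * (T / φ T) * (L T)⁻¹
      = (φ T * L T)⁻¹ * (m T * (Real.log (α * T) - Real.log (m T) + A) - B * T)
  rw [e2, e1, e3]
  field_simp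
  try ring
  try exact Or.inl trivial

end Limits

lemma zero_lim {φ : ℝ → ℝ} (hφ : Filter.Tendsto (fun T => φ T / T) Filter.atTop Filter.atTop)
    (α : ℝ) :
    Filter.Tendsto (fun T => (φ T * Real.log (φ T / T))⁻¹ * (-(α * T)))
      Filter.atTop (𝓝 0) := by
  set L : ℝ → ℝ := fun T => Real.log (φ T / T) with hL
  have hLtop := logratio_top hφ
  have hTφ : Filter.Tendsto (fun T => T / φ T) Filter.atTop (𝓝 0) := by
    have := hφ.inv_tendsto_atTop
    apply this.congr'
    filter_upwards [eventually_gt_atTop (0:ℝ)] with T h1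
    simp only [Pi.inv_apply]
    rw [inv_div]
  have hLinv : Filter.Tendsto (fun T => (L T)⁻¹) Filter.atTop (𝓝 0) := hLtop.inv_tendsto_atTop
  have hα : Filter.Tendsto (fun _ : ℝ => -α) Filter.atTop (𝓝 (-α)) := tendsto_const_nhds
  have hmain := (hα.mul hTφ).mul hLinv
  rw [mul_zero] at hmain
  apply hmain.congr
  intro T
  show -α * (T / φ T) * (L T)⁻¹ = (φ T * L T)⁻¹ * (-(α * T))
  rw [mul_inv]
  ring

lemma limsup_le_of_ev_le_tendsto {f : ℝ → EReal} {u : ℝ → ℝ} {a : ℝ}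
    (h : ∀ᶠ T in Filter.atTop, f T ≤ ((u T : ℝ) : EReal))
    (hu : Filter.Tendsto u Filter.atTop (𝓝 a)) :
    Filter.limsup f Filter.atTop ≤ (a : EReal) := by
  have h2 : Filter.Tendsto (fun T => ((u T : ℝ) : EReal)) Filter.atTop (𝓝 (a : EReal)) := by
    exact (EReal.tendsto_coe).2 hu
  calc Filter.limsup f Filter.atTop ≤ Filter.limsup (fun T => ((u T : ℝ) : EReal)) Filter.atTop :=
        Filter.limsup_le_limsup h
    _ = (a : EReal) := h2.limsup_eq

lemma le_liminf_of_ev_le_tendsto {f : ℝ → EReal} {u : ℝ → ℝ} {a : ℝ}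
    (h : ∀ᶠ T in Filter.atTop, ((u T : ℝ) : EReal) ≤ f T)
    (hu : Filter.Tendsto u Filter.atTop (𝓝 a)) :
    (a : EReal) ≤ Filter.liminf f Filter.atTop := by
  have h2 : Filter.Tendsto (fun T => ((u T : ℝ) : EReal)) Filter.atTop (𝓝 (a : EReal)) := by
    exact (EReal.tendsto_coe).2 hu
  calc (a : EReal) = Filter.liminf (fun T => ((u T : ℝ) : EReal)) Filter.atTop := h2.liminf_eq.symm
    _ ≤ Filter.liminf f Filter.atTop := Filter.liminf_le_liminf h

lemma log_factorial_lb (m : ℕ) :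
    (m : ℝ) * Real.log m - m ≤ Real.log (Nat.factorial m) := by
  have hfac : (0:ℝ) < Nat.factorial m := by positivity
  have key : (m : ℝ) ^ m ≤ Real.exp m * Nat.factorial m := by
    have h1 : (m:ℝ) ^ m / Nat.factorial m ≤ Real.exp m := by
      calc (m:ℝ) ^ m / Nat.factorial m
          ≤ ∑ i ∈ Finset.range (m+1), (m:ℝ) ^ i / Nat.factorial i := by
            refine Finset.single_le_sum (f := fun i => (m:ℝ) ^ i / (Nat.factorial i : ℝ))
              (fun i _ => by positivity) (Finset.self_mem_range_succ m)
        _ ≤ Real.exp m := Real.sum_le_exp_of_nonneg (by positivity) (m+1)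
    rwa [div_le_iff₀ hfac] at h1
  rcases Nat.eq_zero_or_pos m with rfl | hm
  · simp
  have := Real.log_le_log (by positivity) key
  rw [Real.log_pow, Real.log_mul (Real.exp_ne_zero _) (ne_of_gt hfac), Real.log_exp] at this
  linarith

/-- The family of real random variables `X T` satisfies the large deviation principle
under `P`, with normalizing function `ψ` and rate function `I`: rate-function level sets
are compact, and for every Borel set `B` the standard upper and lower large-deviation
bounds hold (logarithms of probabilities are taken in `EReal`, with `log 0 = ⊥`). -/
def SatisfiesLDP {Ω : Type*} [MeasurableSpace Ω] (P : Measure Ω)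
    (X : ℝ → Ω → ℝ) (ψ : ℝ → ℝ) (I : ℝ → EReal) : Prop :=
  (∀ c : ℝ, 0 ≤ c → IsCompact {x : ℝ | I x ≤ (c : EReal)}) ∧
  (∀ B : Set ℝ, MeasurableSet B →
    Filter.limsup (fun T => (((ψ T)⁻¹ : ℝ) : EReal) * ENNReal.log (P {ω | X T ω ∈ B}))
        Filter.atTop
      ≤ -(⨅ x ∈ closure B, I x)) ∧
  (∀ B : Set ℝ, MeasurableSet B →
    -(⨅ x ∈ interior B, I x) ≤
      Filter.liminf (fun T => (((ψ T)⁻¹ : ℝ) : EReal) * ENNReal.log (P {ω | X T ω ∈ B}))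
        Filter.atTop)

/-- **Theorem (SLDP, superlinear regime).** If `φ(T)/T → ∞`, then the family
`ξ_T(1) = ξ(T)/φ(T)` satisfies the large deviation principle with normalizing function
`ψ(T) = φ(T)·ln(φ(T)/T)` and rate function `I₂`, where `I₂(x) = ∞` for `x < 0` and
`I₂(x) = x` for `x ≥ 0`. -/
theorem sldp_superlinear_poisson_uniform_catastrophes
    {Ω : Type*} [MeasurableSpace Ω] (P : Measure Ω) [IsProbabilityMeasure P]
    (lam mu alpha : ℝ) (hlam : 0 < lam) (hmu : 0 < mu) (halpha : 0 < alpha)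
    (η : ℕ → Ω → ℕ) (ν : ℝ → Ω → ℕ)
    (hη : IsMarkovChainFrom P lam mu 0 η)
    (hν : IsPoissonProcess P alpha ν)
    (hind : IndepProc P η ν)
    (φ : ℝ → ℝ) (hφpos : ∀ T > (0 : ℝ), 0 < φ T)
    (hφ : Tendsto (fun T => φ T / T) atTop atTop) :
    SatisfiesLDP P (fun T ω => (η (ν T ω) ω : ℝ) / φ T)
      (fun T => φ T * Real.log (φ T / T))
      (fun x => if x < 0 then (⊤ : EReal) else ((x : ℝ) : EReal)) := by
  set I : ℝ → EReal := fun x => if x < 0 then (⊤ : EReal) else ((x : ℝ) : EReal) with hI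
  set ψ : ℝ → ℝ := fun T => φ T * Real.log (φ T / T) with hψ
  set X : ℝ → Ω → ℝ := fun T ω => (η (ν T ω) ω : ℝ) / φ T with hX
  have hψtop : Tendsto ψ atTop atTop := psi_top hφ
  have hψev : ∀ᶠ T in atTop, 0 < ψ T := hψtop.eventually_gt_atTop 0
  have hφev : ∀ᶠ T in atTop, 0 < φ T := by
    filter_upwards [eventually_gt_atTop (0:ℝ)] with T h using hφpos T h
  -- nonnegativity of X
  have hXnn : ∀ᶠ T in atTop, ∀ ω, 0 ≤ X T ω := by
    filter_upwards [hφev] with T h ω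
    exact div_nonneg (Nat.cast_nonneg _) h.le
  -- the null set where η exceeds the diagonal
  have hN : P (⋃ k : ℕ, {ω | k < η k ω}) = 0 :=
    measure_iUnion_null fun k => markov_null P lam mu η hη k
  -- key upper bound
  have KEY_UP : ∀ (B : Set ℝ) (b : ℝ), 0 ≤ b → (∀ y ∈ B, 0 ≤ y → b ≤ y) →
      Filter.limsup (fun T => (((ψ T)⁻¹ : ℝ) : EReal) * ENNReal.log (P {ω | X T ω ∈ B}))
        Filter.atTop ≤ ((-b : ℝ) : EReal) := by
    intro B b hb0 hbB
    rcases eq_or_lt_of_le hb0 with hb | hb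
    · -- b = 0 : use that probabilities are at most one
      have hev : ∀ᶠ T in atTop,
          (((ψ T)⁻¹ : ℝ) : EReal) * ENNReal.log (P {ω | X T ω ∈ B}) ≤ (((0:ℝ)) : EReal) := by
        filter_upwards [hψev] with T h1
        have hP : P {ω | X T ω ∈ B} ≤ 1 := prob_le_one
        have hlog : ENNReal.log (P {ω | X T ω ∈ B}) ≤ ((0:ℝ) : EReal) := by
          calc ENNReal.log (P {ω | X T ω ∈ B}) ≤ ENNReal.log 1 := ENNReal.log_monotone hP
            _ = ((0:ℝ) : EReal) := by simp
        calc (((ψ T)⁻¹ : ℝ) : EReal) * ENNReal.log (P {ω | X T ω ∈ B})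
            ≤ (((ψ T)⁻¹ : ℝ) : EReal) * ((0:ℝ) : EReal) :=
              mul_le_mul_of_nonneg_left hlog (by exact_mod_cast inv_nonneg.mpr h1.le)
          _ = (((0:ℝ)) : EReal) := by
              rw [← EReal.coe_mul, mul_zero]
        
      have := limsup_le_of_ev_le_tendsto hev (tendsto_const_nhds (x := (0:ℝ)))
      rw [← hb]
      simpa using this
    · -- b > 0
      have hcore := core_lim hφpos hφ hb 1 0 alpha halpha
      apply limsup_le_of_ev_le_tendsto _ hcore
      have hφb : ∀ᶠ T in atTop, 1 / b ≤ φ T := (phi_top hφ).eventually_ge_atTop (1/b)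
      filter_upwards [hψev, hφev, eventually_gt_atTop (0:ℝ), hφb] with T h1 h2 h3 h4
      set m : ℕ := ⌈b * φ T⌉₊ with hmdef
      have hbφ : 0 < b * φ T := by positivity
      have hm1 : 1 ≤ m := Nat.one_le_iff_ne_zero.mpr (Nat.ceil_pos.mpr hbφ).ne'
      have hsub : {ω | X T ω ∈ B} ⊆ (⋃ k : ℕ, {ω | k < η k ω}) ∪ {ω | m ≤ ν T ω} := by
        intro ω hω
        by_cases hNmem : ω ∈ ⋃ k : ℕ, {ω | k < η k ω}
        · exact Or.inl hNmem
        · refine Or.inr ?_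
          simp only [mem_iUnion, mem_setOf_eq, not_exists, not_lt] at hNmem
          simp only [mem_setOf_eq] at hω ⊢
          have hx0 : 0 ≤ X T ω := div_nonneg (Nat.cast_nonneg _) h2.le
          have hbx : b ≤ X T ω := hbB _ hω hx0
          have hdiv : b ≤ (η (ν T ω) ω : ℝ) / φ T := hbx
          rw [le_div_iff₀ h2] at hdiv
          have hmle : m ≤ η (ν T ω) ω := Nat.ceil_le.2 (by linarith)
          exact le_trans hmle (hNmem (ν T ω))
      have hPle : P {ω | X T ω ∈ B} ≤
          ENNReal.ofReal ((alpha * T) ^ m / (Nat.factorial m)) := by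
        calc P {ω | X T ω ∈ B}
            ≤ P ((⋃ k : ℕ, {ω | k < η k ω}) ∪ {ω | m ≤ ν T ω}) := measure_mono hsub
          _ ≤ P (⋃ k : ℕ, {ω | k < η k ω}) + P {ω | m ≤ ν T ω} := measure_union_le _ _
          _ = P {ω | m ≤ ν T ω} := by rw [hN, zero_add]
          _ ≤ ENNReal.ofReal ((alpha * T) ^ m / (Nat.factorial m)) :=
              poisson_tail P ν hν h3.le halpha.le m
      have hαT : 0 < alpha * T := by positivity
      have hvpos : 0 < (alpha * T) ^ m / (Nat.factorial m) := by positivity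
      have hmR : (1:ℝ) ≤ (m:ℝ) := by exact_mod_cast hm1
      have hlogle : ENNReal.log (P {ω | X T ω ∈ B}) ≤
          (((m:ℝ) * (Real.log (alpha * T) - Real.log (m:ℝ) + 1) - 0 * T : ℝ) : EReal) := by
        calc ENNReal.log (P {ω | X T ω ∈ B})
            ≤ ENNReal.log (ENNReal.ofReal ((alpha * T) ^ m / (Nat.factorial m))) :=
              ENNReal.log_monotone hPle
          _ = ((Real.log ((alpha * T) ^ m / (Nat.factorial m)) : ℝ) : EReal) := by
              rw [ENNReal.log_ofReal, if_neg (not_le.mpr hvpos)]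
          _ ≤ _ := by
              apply EReal.coe_le_coe_iff.2
              rw [Real.log_div (by positivity) (by positivity), Real.log_pow]
              have hfb := log_factorial_lb m
              nlinarith [hfb]
      calc (((ψ T)⁻¹ : ℝ) : EReal) * ENNReal.log (P {ω | X T ω ∈ B})
          ≤ (((ψ T)⁻¹ : ℝ) : EReal) *
              (((m:ℝ) * (Real.log (alpha * T) - Real.log (m:ℝ) + 1) - 0 * T : ℝ) : EReal) :=
            mul_le_mul_of_nonneg_left hlogle (by exact_mod_cast inv_nonneg.mpr h1.le)
        _ = _ := by rw [← EReal.coe_mul]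
  -- key lower bound
  have KEY_LOW : ∀ (B : Set ℝ) (x : ℝ), 0 ≤ x →
      (∃ δ > (0:ℝ), Set.Ioo (x - δ) (x + δ) ⊆ B) →
      ((-x : ℝ) : EReal) ≤
        Filter.liminf (fun T => (((ψ T)⁻¹ : ℝ) : EReal) * ENNReal.log (P {ω | X T ω ∈ B}))
          Filter.atTop := by
    rintro B x hx0 ⟨δ, hδ, hIoo⟩
    set c := lam / (lam + mu) with hcdef
    have hc0 : 0 < c := div_pos hlam (by linarith)
    have hlim : Tendsto (fun T => (φ T * Real.log (φ T / T))⁻¹ *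
        ((⌈x * φ T⌉₊ : ℝ) * (Real.log (alpha * T) - Real.log (⌈x * φ T⌉₊ : ℝ) + Real.log c)
          - alpha * T)) atTop (𝓝 (-x)) := by
      rcases eq_or_lt_of_le hx0 with hx | hx
      · subst hx
        rw [neg_zero]
        apply (zero_lim hφ alpha).congr
        intro T
        simp
      · exact core_lim hφpos hφ hx (Real.log c) alpha alpha halpha
    apply le_liminf_of_ev_le_tendsto _ hlim
    have hφδ : ∀ᶠ T in atTop, 1 / δ ≤ φ T := (phi_top hφ).eventually_ge_atTop (1/δ)
    filter_upwards [hψev, hφev, eventually_gt_atTop (0:ℝ), hφδ] with T h1 h2 h3 h4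
    set m : ℕ := ⌈x * φ T⌉₊ with hmdef
    have hαT : 0 < alpha * T := by positivity
    have hmlb : x * φ T ≤ (m:ℝ) := Nat.le_ceil _
    have hmub : (m:ℝ) < x * φ T + 1 := Nat.ceil_lt_add_one (by positivity)
    have hδφ : 1 ≤ δ * φ T := by
      rw [div_le_iff₀ hδ] at h4
      linarith [h4]
    -- event inclusion
    have hsubE : {ω | ∀ l ≤ m, η l ω = l} ∩ {ω | ν T ω = m} ⊆ {ω | X T ω ∈ B} := by
      rintro ω ⟨hp, hq⟩
      simp only [mem_setOf_eq] at hp hq ⊢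
      have hXval : X T ω = (m:ℝ) / φ T := by
        rw [hX]
        simp only []
        rw [hq, hp m le_rfl]
      rw [hXval]
      apply hIoo
      constructor
      · calc x - δ < x := by linarith
          _ ≤ (m:ℝ) / φ T := by rw [le_div_iff₀ h2]; linarith
      · rw [div_lt_iff₀ h2]
        nlinarith
    -- probability lower bound
    have hmm : (0:ℝ) < (m:ℝ) ^ m := by
      rcases Nat.eq_zero_or_pos m with h | h
      · rw [h]; norm_num
      · have : (0:ℝ) < (m:ℝ) := by exact_mod_cast h
        positivity
    have hfacle : (Nat.factorial m : ℝ) ≤ (m:ℝ) ^ m := by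
      exact_mod_cast Nat.factorial_le_pow m
    have hPge : ENNReal.ofReal (c ^ m * (Real.exp (-(alpha * T)) * (alpha * T) ^ m / (m:ℝ) ^ m))
        ≤ P {ω | X T ω ∈ B} := by
      calc ENNReal.ofReal (c ^ m * (Real.exp (-(alpha * T)) * (alpha * T) ^ m / (m:ℝ) ^ m))
          ≤ ENNReal.ofReal (c ^ m *
              (Real.exp (-(alpha * T)) * (alpha * T) ^ m / (Nat.factorial m))) := by
            apply ENNReal.ofReal_le_ofReal
            apply mul_le_mul_of_nonneg_left _ (by positivity)
            apply div_le_div_of_nonneg_left (by positivity) (by positivity) hfacle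
        _ = ENNReal.ofReal (c ^ m) *
              ENNReal.ofReal (Real.exp (-(alpha * T)) * (alpha * T) ^ m / (Nat.factorial m)) := by
            rw [← ENNReal.ofReal_mul (by positivity)]
        _ ≤ P {ω | ∀ l ≤ m, η l ω = l} * P {ω | ν T ω = m} := by
            apply mul_le_mul' (markov_straight P hlam hmu η hη m)
            rw [poisson_pt P ν hν h3.le m]
        _ = P ({ω | ∀ l ≤ m, η l ω = l} ∩ {ω | ν T ω = m}) :=
            (indep_event P η ν hind m T).symm
        _ ≤ P {ω | X T ω ∈ B} := measure_mono hsubE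
    have hwpos : (0:ℝ) < c ^ m * (Real.exp (-(alpha * T)) * (alpha * T) ^ m / (m:ℝ) ^ m) := by
      positivity
    have hlogge : ((Real.log (c ^ m * (Real.exp (-(alpha * T)) * (alpha * T) ^ m / (m:ℝ) ^ m)) : ℝ) : EReal)
        ≤ ENNReal.log (P {ω | X T ω ∈ B}) := by
      calc ((Real.log (c ^ m * (Real.exp (-(alpha * T)) * (alpha * T) ^ m / (m:ℝ) ^ m)) : ℝ) : EReal)
          = ENNReal.log (ENNReal.ofReal
              (c ^ m * (Real.exp (-(alpha * T)) * (alpha * T) ^ m / (m:ℝ) ^ m))) :=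
            (ENNReal.log_ofReal_of_pos hwpos).symm
        _ ≤ ENNReal.log (P {ω | X T ω ∈ B}) := ENNReal.log_monotone hPge
    have hw'eq : Real.log (c ^ m * (Real.exp (-(alpha * T)) * (alpha * T) ^ m / (m:ℝ) ^ m))
        = (m:ℝ) * (Real.log (alpha * T) - Real.log (m:ℝ) + Real.log c) - alpha * T := by
      rw [Real.log_mul (by positivity) (by positivity),
        Real.log_div (by positivity) (by positivity),
        Real.log_mul (Real.exp_ne_zero _) (by positivity),
        Real.log_exp, Real.log_pow, Real.log_pow, Real.log_pow]
      push_cast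
      ring
    calc (((φ T * Real.log (φ T / T))⁻¹ *
          ((m : ℝ) * (Real.log (alpha * T) - Real.log (m : ℝ) + Real.log c) - alpha * T) : ℝ) : EReal)
        = (((ψ T)⁻¹ : ℝ) : EReal) *
            ((Real.log (c ^ m * (Real.exp (-(alpha * T)) * (alpha * T) ^ m / (m:ℝ) ^ m)) : ℝ) : EReal) := by
          rw [← EReal.coe_mul, hw'eq]
      _ ≤ (((ψ T)⁻¹ : ℝ) : EReal) * ENNReal.log (P {ω | X T ω ∈ B}) :=
          mul_le_mul_of_nonneg_left hlogge (by exact_mod_cast inv_nonneg.mpr h1.le)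
  refine ⟨?_, ?_, ?_⟩
  · -- compact level sets
    intro c hc
    have : {x : ℝ | I x ≤ (c : EReal)} = Set.Icc 0 c := by
      ext x
      simp only [hI, mem_setOf_eq, Set.mem_Icc]
      by_cases hx : x < 0
      · rw [if_pos hx]
        simp only [top_le_iff]
        constructor
        · intro h
          exact absurd h.symm (by exact fun h => (EReal.coe_lt_top c).ne h.symm)
        · intro h; linarith [h.1]
      · rw [if_neg hx]
        push_neg at hx
        rw [EReal.coe_le_coe_iff]
        exact ⟨fun h => ⟨hx, h⟩, fun h => h.2⟩
    rw [this]
    exact isCompact_Icc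
  · -- upper bound
    intro B _
    set a := ⨅ x ∈ closure B, I x with ha
    have ha0 : 0 ≤ a := by
      refine le_iInf fun x => le_iInf fun _ => ?_
      by_cases hx : x < 0
      · simp [hI, if_pos hx, le_top]
      · push_neg at hx
        simp only [hI, if_neg (not_lt.mpr hx)]
        exact_mod_cast hx
    by_cases hatop : a = ⊤
    · -- closure B contains no nonnegative point; probability is 0 eventually
      have hneg : ∀ y ∈ closure B, y < 0 := by
        intro y hy
        by_contra hy'
        push_neg at hy'
        have : I y = (y : EReal) := by simp [hI, if_neg (not_lt.mpr hy')]
        have h2 : a ≤ I y := iInf₂_le y hy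
        rw [hatop, this] at h2
        exact absurd (top_le_iff.mp h2) (EReal.coe_ne_top y)
      have hbot : ∀ᶠ T in atTop,
          (((ψ T)⁻¹ : ℝ) : EReal) * ENNReal.log (P {ω | X T ω ∈ B}) = ⊥ := by
        filter_upwards [hXnn, hψev] with T h1 h2
        have : {ω | X T ω ∈ B} = ∅ := by
          ext ω
          simp only [mem_setOf_eq, mem_empty_iff_false, iff_false]
          intro hm
          exact absurd (hneg _ (subset_closure hm)) (not_lt.mpr (h1 ω))
        rw [this, measure_empty, ENNReal.log_zero]
        exact EReal.coe_mul_bot_of_pos (by positivity)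
      have : Filter.limsup (fun T => (((ψ T)⁻¹ : ℝ) : EReal) * ENNReal.log (P {ω | X T ω ∈ B}))
          Filter.atTop ≤ ⊥ := by
        refine Filter.limsup_le_of_le (by isBoundedDefault) ?_
        filter_upwards [hbot] with T h using le_of_eq h
      rw [hatop]
      simpa using this
    · have habot : a ≠ ⊥ := ne_bot_of_le_ne_bot (by simp) ha0
      set b := a.toReal with hb
      have hab : (b : EReal) = a := EReal.coe_toReal hatop habot
      have hb0 : 0 ≤ b := by
        have := EReal.coe_le_coe_iff.mp (by rw [hab] ; exact_mod_cast ha0 : ((0:ℝ) : EReal) ≤ (b : EReal))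
        exact this
      have hbB : ∀ y ∈ B, 0 ≤ y → b ≤ y := by
        intro y hy hy0
        have h1 : a ≤ I y := iInf₂_le y (subset_closure hy)
        rw [hI] at h1
        simp only [if_neg (not_lt.mpr hy0)] at h1
        rw [← hab] at h1
        exact_mod_cast h1
      have := KEY_UP B b hb0 hbB
      calc Filter.limsup _ Filter.atTop ≤ ((-b : ℝ) : EReal) := this
        _ = -a := by rw [← hab]; exact_mod_cast EReal.coe_neg b
  · -- lower bound
    intro B _
    rw [EReal.neg_le]
    refine le_iInf fun x => le_iInf fun hx => ?_
    rw [← EReal.neg_le]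
    by_cases hx0 : x < 0
    · simp only [hI, if_pos hx0]
      simpa using bot_le
    · push_neg at hx0
      simp only [hI, if_neg (not_lt.mpr hx0)]
      obtain ⟨ε, hε, hball⟩ := Metric.mem_nhds_iff.mp (mem_interior_iff_mem_nhds.mp hx)
      have hIoo : Set.Ioo (x - ε) (x + ε) ⊆ B := by
        rw [← Real.ball_eq_Ioo]
        exact hball
      have := KEY_LOW B x hx0 ⟨ε, hε, hIoo⟩
      calc -((x:ℝ) : EReal) = ((-x : ℝ) : EReal) := by exact_mod_cast (EReal.coe_neg x).symm
        _ ≤ _ := this
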